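/- Let c > 0 and define f(w) = 2^{c√(w·log w)}. Then there exists n₀ ∈ ℕ such that f(k) + f(ℓ) + 1 ≤ f(k + ℓ) for all natural numbers k, ℓ ≥ n₀. -/
import Mathlib

open Real

noncomputable def TT (c : ℝ) : ℝ := max 1 ((2 / (c * Real.log 2)) ^ 2)

lemma ratio_mono (c : ℝ) (hc : 0 < c) {x y : ℝ} (hTy : TT c ≤ y) (hyx : y ≤ x) :
    (2 : ℝ) ^ (c * Real.sqrt y) * x ≤ (2 : ℝ) ^ (c * Real.sqrt x) * y := by
  have hl2 : 0 < Real.log 2 := Real.log_pos one_lt_two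
  have hy1 : (1:ℝ) ≤ y := le_trans (le_max_left _ _) hTy
  have hx1 : (1:ℝ) ≤ x := hy1.trans hyx
  have hy0 : 0 < y := by linarith
  have hx0 : 0 < x := by linarith
  set u := Real.sqrt x with hu
  set v := Real.sqrt y with hv
  have hv0 : 0 < v := Real.sqrt_pos.mpr hy0
  have hu0 : 0 < u := Real.sqrt_pos.mpr hx0
  have huv : v ≤ u := Real.sqrt_le_sqrt hyx
  have hvb : 2 / (c * Real.log 2) ≤ v := by
    have h1 : (2 / (c * Real.log 2)) ^ 2 ≤ y := le_trans (le_max_right _ _) hTy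
    have h2 := Real.sqrt_le_sqrt h1
    rwa [Real.sqrt_sq (by positivity)] at h2
  have hcl : 2 ≤ c * Real.log 2 * v := by
    rw [div_le_iff₀ (by positivity)] at hvb
    linarith
  have hlogx : Real.log x = 2 * Real.log u := by
    rw [hu, Real.log_sqrt hx0.le]; ring
  have hlogy : Real.log y = 2 * Real.log v := by
    rw [hv, Real.log_sqrt hy0.le]; ring
  have hquot : Real.log u - Real.log v ≤ (u - v) / v := by
    have h := Real.log_le_sub_one_of_pos (div_pos hu0 hv0)
    rw [Real.log_div hu0.ne' hv0.ne'] at h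
    have he : u / v - 1 = (u - v) / v := by field_simp
    linarith [he ▸ h]
  have hq2 : (Real.log u - Real.log v) * v ≤ u - v := (le_div_iff₀ hv0).mp hquot
  have hkey : Real.log x - Real.log y ≤ c * Real.log 2 * (u - v) := by
    rw [hlogx, hlogy]
    nlinarith [hq2, hcl, sub_nonneg.mpr huv, hv0, mul_nonneg (sub_nonneg.mpr huv) hl2.le]
  rw [show (2:ℝ) ^ (c * v) = Real.exp (Real.log 2 * (c * v)) from Real.rpow_def_of_pos two_pos _,
    show (2:ℝ) ^ (c * u) = Real.exp (Real.log 2 * (c * u)) from Real.rpow_def_of_pos two_pos _,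
    ← Real.exp_log hx0, ← Real.exp_log hy0, ← Real.exp_add, ← Real.exp_add, Real.exp_le_exp]
  nlinarith [hkey]

lemma three_sum (c : ℝ) (hc : 0 < c) {a b s : ℝ} (ha : TT c ≤ a) (hb : TT c ≤ b)
    (hs : TT c ≤ s) :
    (2:ℝ) ^ (c * Real.sqrt a) + (2:ℝ) ^ (c * Real.sqrt b) + (2:ℝ) ^ (c * Real.sqrt s) ≤
      (2:ℝ) ^ (c * Real.sqrt (a + b + s)) := by
  have h1 : (1:ℝ) ≤ TT c := le_max_left _ _
  have ha1 : (1:ℝ) ≤ a := h1.trans ha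
  have hb1 : (1:ℝ) ≤ b := h1.trans hb
  have hs1 : (1:ℝ) ≤ s := h1.trans hs
  have hX0 : (0:ℝ) < a + b + s := by linarith
  have hA := ratio_mono c hc ha (by linarith : a ≤ a + b + s)
  have hB := ratio_mono c hc hb (by linarith : b ≤ a + b + s)
  have hS := ratio_mono c hc hs (by linarith : s ≤ a + b + s)
  have hsum : ((2:ℝ) ^ (c * Real.sqrt a) + (2:ℝ) ^ (c * Real.sqrt b)
      + (2:ℝ) ^ (c * Real.sqrt s)) * (a + b + s) ≤
      (2:ℝ) ^ (c * Real.sqrt (a + b + s)) * (a + b + s) := by nlinarith [hA, hB, hS]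
  exact le_of_mul_le_mul_right hsum hX0

lemma aux_main (c : ℝ) (hc : 0 < c) (k l : ℕ)
    (hk : ⌈TT c / Real.log 2⌉₊ + ⌈TT c⌉₊ + 3 ≤ k)
    (hl : ⌈TT c / Real.log 2⌉₊ + ⌈TT c⌉₊ + 3 ≤ l) (hlk : l ≤ k) :
    (2 : ℝ) ^ (c * Real.sqrt ((k : ℝ) * Real.log (k : ℝ))) +
        (2 : ℝ) ^ (c * Real.sqrt ((l : ℝ) * Real.log (l : ℝ))) + 1 ≤
      (2 : ℝ) ^ (c * Real.sqrt (((k : ℝ) + (l : ℝ)) * Real.log ((k : ℝ) + (l : ℝ)))) := by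
  have hl2 : 0 < Real.log 2 := Real.log_pos one_lt_two
  set n₀ : ℕ := ⌈TT c / Real.log 2⌉₊ + ⌈TT c⌉₊ + 3 with hn₀
  have hk3 : (3:ℝ) ≤ (k:ℝ) := by exact_mod_cast le_trans (by omega) hk
  have hl3 : (3:ℝ) ≤ (l:ℝ) := by exact_mod_cast le_trans (by omega) hl
  have hkT : TT c ≤ (k:ℝ) := by
    refine le_trans (Nat.le_ceil _) ?_
    exact_mod_cast le_trans (by omega) hk
  have hlT : TT c ≤ (l:ℝ) := by
    refine le_trans (Nat.le_ceil _) ?_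
    exact_mod_cast le_trans (by omega) hl
  have hexp1 : Real.exp 1 ≤ 3 := by linarith [Real.exp_one_lt_d9]
  have hlogk : 1 ≤ Real.log (k:ℝ) :=
    (Real.le_log_iff_exp_le (by linarith)).mpr (hexp1.trans hk3)
  have hlogl : 1 ≤ Real.log (l:ℝ) :=
    (Real.le_log_iff_exp_le (by linarith)).mpr (hexp1.trans hl3)
  have ha : TT c ≤ (k:ℝ) * Real.log (k:ℝ) := by nlinarith
  have hb : TT c ≤ (l:ℝ) * Real.log (l:ℝ) := by nlinarith
  have hs : TT c ≤ (l:ℝ) * Real.log 2 := by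
    have h1 : TT c / Real.log 2 ≤ (l:ℝ) := by
      refine le_trans (Nat.le_ceil _) ?_
      exact_mod_cast le_trans (by omega) hl
    exact (div_le_iff₀ hl2).mp h1
  -- key: x ≥ a + b + s
  have hlkR : (l:ℝ) ≤ (k:ℝ) := by exact_mod_cast hlk
  have hlog2l : Real.log (2 * (l:ℝ)) = Real.log 2 + Real.log (l:ℝ) :=
    Real.log_mul two_ne_zero (by linarith)
  have hmono1 : Real.log (2 * (l:ℝ)) ≤ Real.log ((k:ℝ) + (l:ℝ)) :=
    Real.log_le_log (by linarith) (by linarith)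
  have hmono2 : Real.log (k:ℝ) ≤ Real.log ((k:ℝ) + (l:ℝ)) :=
    Real.log_le_log (by linarith) (by linarith)
  have hx : (k:ℝ) * Real.log (k:ℝ) + (l:ℝ) * Real.log (l:ℝ) + (l:ℝ) * Real.log 2 ≤
      ((k:ℝ) + (l:ℝ)) * Real.log ((k:ℝ) + (l:ℝ)) := by nlinarith
  have hts := three_sum c hc ha hb hs
  have h1 : (1:ℝ) ≤ (2:ℝ) ^ (c * Real.sqrt ((l:ℝ) * Real.log 2)) := by
    calc (1:ℝ) = (2:ℝ) ^ (0:ℝ) := (Real.rpow_zero 2).symm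
    _ ≤ _ := Real.rpow_le_rpow_of_exponent_le one_le_two (by positivity)
  have hmono : (2:ℝ) ^ (c * Real.sqrt ((k:ℝ) * Real.log (k:ℝ) + (l:ℝ) * Real.log (l:ℝ)
      + (l:ℝ) * Real.log 2)) ≤
      (2:ℝ) ^ (c * Real.sqrt (((k:ℝ) + (l:ℝ)) * Real.log ((k:ℝ) + (l:ℝ)))) :=
    Real.rpow_le_rpow_of_exponent_le one_le_two
      (mul_le_mul_of_nonneg_left (Real.sqrt_le_sqrt hx) hc.le)
  linarith

/-- Let `c > 0` and `f w = 2 ^ (c * √(w * log w))`. Then there is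
an `n₀ ∈ ℕ` such that `f k + f ℓ + 1 ≤ f (k + ℓ)` for all naturals `k, ℓ ≥ n₀`. -/
theorem superadditive_estimate (c : ℝ) (hc : 0 < c) :
    ∃ n₀ : ℕ, ∀ k l : ℕ, n₀ ≤ k → n₀ ≤ l →
      (2 : ℝ) ^ (c * Real.sqrt ((k : ℝ) * Real.log (k : ℝ))) +
        (2 : ℝ) ^ (c * Real.sqrt ((l : ℝ) * Real.log (l : ℝ))) + 1 ≤
      (2 : ℝ) ^ (c * Real.sqrt (((k : ℝ) + (l : ℝ)) * Real.log ((k : ℝ) + (l : ℝ)))) := by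
  refine ⟨⌈TT c / Real.log 2⌉₊ + ⌈TT c⌉₊ + 3, fun k l hk hl => ?_⟩
  rcases le_total l k with h | h
  · exact aux_main c hc k l hk hl h
  · have := aux_main c hc l k hl hk h
    rw [add_comm (l:ℝ) (k:ℝ)] at this
    linarith
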